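/- arXiv:1601.04999 — 2 statements merged into one kernel-verified Lean document; each statement's English description precedes it below -/
import Mathlib

section
/- Let p be a prime, g = g_+ + g_-, C ∈ GL_g(Z_p), and for n ≥ 1 set C_n = diag(I_{g_-}, Φ_{p^n}(1+X) I_{g_+}) · C^{-1} and C*_n = diag(Φ_{p^n}(1+X) I_{g_-}, I_{g_+}) · C^t, where Φ_{p^n} is the p^n-th cyclotomic polynomial. With C_φ = C·diag(I_{g_-},(1/p)I_{g_+}) and C*_φ = (1/p)(C_φ^{-1})^t, one has for every n ≥ 1 the identity (C_1^t ⋯ C_n^t (C_φ^t)^{n+1}) · ((C*_φ)^{n+1} C*_n ⋯ C*_1) = (1/p^{n+1}) ∏_{k=1}^{n} Φ_{p^k}(1+X) · I_g as g×g matrices over Q_p[X]. -/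
open Matrix Polynomial

variable (p : ℕ) [Fact p.Prime] {gm gp : ℕ}

/-- `Φ_{p^k}(1+X)` as a polynomial over `ℚ_p`. -/
noncomputable def PhiP (k : ℕ) : ℚ_[p][X] :=
  (cyclotomic (p ^ k) ℚ_[p]).comp (X + 1)

/-- `C_φ = C · diag(I_{g_-}, (1/p) I_{g_+})`. -/
noncomputable def Cphi (C : Matrix (Fin gm ⊕ Fin gp) (Fin gm ⊕ Fin gp) ℚ_[p]) :
    Matrix (Fin gm ⊕ Fin gp) (Fin gm ⊕ Fin gp) ℚ_[p] :=
  C * fromBlocks (1 : Matrix (Fin gm) (Fin gm) ℚ_[p]) 0 0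
    ((p : ℚ_[p])⁻¹ • (1 : Matrix (Fin gp) (Fin gp) ℚ_[p]))

/-- `C*_φ = (1/p)·(C_φ⁻¹)ᵗ`. -/
noncomputable def Cstarphi (C : Matrix (Fin gm ⊕ Fin gp) (Fin gm ⊕ Fin gp) ℚ_[p]) :
    Matrix (Fin gm ⊕ Fin gp) (Fin gm ⊕ Fin gp) ℚ_[p] :=
  (p : ℚ_[p])⁻¹ • ((Cphi p C)⁻¹)ᵀ

/-- `C_n = diag(I_{g_-}, Φ_{p^n}(1+X) I_{g_+}) · C⁻¹`, a matrix over `ℚ_p[X]`. -/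
noncomputable def Cmat (C : Matrix (Fin gm ⊕ Fin gp) (Fin gm ⊕ Fin gp) ℚ_[p]) (n : ℕ) :
    Matrix (Fin gm ⊕ Fin gp) (Fin gm ⊕ Fin gp) ℚ_[p][X] :=
  fromBlocks (1 : Matrix (Fin gm) (Fin gm) ℚ_[p][X]) 0 0
      (PhiP p n • (1 : Matrix (Fin gp) (Fin gp) ℚ_[p][X])) *
    (C⁻¹).map Polynomial.C

/-- `C*_n = diag(Φ_{p^n}(1+X) I_{g_-}, I_{g_+}) · Cᵗ`, a matrix over `ℚ_p[X]`. -/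
noncomputable def Cstarmat (C : Matrix (Fin gm ⊕ Fin gp) (Fin gm ⊕ Fin gp) ℚ_[p]) (n : ℕ) :
    Matrix (Fin gm ⊕ Fin gp) (Fin gm ⊕ Fin gp) ℚ_[p][X] :=
  fromBlocks (PhiP p n • (1 : Matrix (Fin gm) (Fin gm) ℚ_[p][X])) 0 0
      (1 : Matrix (Fin gp) (Fin gp) ℚ_[p][X]) *
    (Cᵀ).map Polynomial.C

-- auxiliary lemmas

lemma cphi_det_isUnit (C : Matrix (Fin gm ⊕ Fin gp) (Fin gm ⊕ Fin gp) ℚ_[p])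
    (hC : C.det ≠ 0) : IsUnit (Cphi p C).det := by
  have hp : (p : ℚ_[p]) ≠ 0 := by
    exact_mod_cast Nat.cast_ne_zero.mpr (Fact.out : p.Prime).ne_zero
  rw [Cphi, det_mul, det_fromBlocks_zero₂₁]
  simp only [det_one, one_mul, smul_eq_mul, det_smul, det_one, mul_one]
  exact (isUnit_iff_ne_zero.2 hC).mul
    (isUnit_iff_ne_zero.2 (pow_ne_zero _ (inv_ne_zero hp)))

lemma mid_one (C : Matrix (Fin gm ⊕ Fin gp) (Fin gm ⊕ Fin gp) ℚ_[p])
    (hC : C.det ≠ 0) :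
    (Cphi p C)ᵀ * Cstarphi p C = (p : ℚ_[p])⁻¹ • 1 := by
  rw [Cstarphi, Matrix.mul_smul, ← Matrix.transpose_mul,
    Matrix.nonsing_inv_mul _ (cphi_det_isUnit p C hC), Matrix.transpose_one]

lemma mid_pow (C : Matrix (Fin gm ⊕ Fin gp) (Fin gm ⊕ Fin gp) ℚ_[p])
    (hC : C.det ≠ 0) (m : ℕ) :
    ((Cphi p C)ᵀ) ^ m * (Cstarphi p C) ^ m = ((p : ℚ_[p])⁻¹) ^ m • 1 := by
  induction m with
  | zero => simp
  | succ m ih =>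
    rw [pow_succ, pow_succ']
    have : ((Cphi p C)ᵀ) ^ m * (Cphi p C)ᵀ * (Cstarphi p C * (Cstarphi p C) ^ m) =
        ((Cphi p C)ᵀ) ^ m * ((Cphi p C)ᵀ * Cstarphi p C) * (Cstarphi p C) ^ m := by
      simp only [Matrix.mul_assoc]
    rw [this, mid_one p C hC, Matrix.mul_smul, Matrix.mul_one, Matrix.smul_mul, ih,
      smul_smul, pow_succ']

lemma map_smul_one (a : ℚ_[p]) :
    ((a • (1 : Matrix (Fin gm ⊕ Fin gp) (Fin gm ⊕ Fin gp) ℚ_[p])).map Polynomial.C) =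
      Polynomial.C a • 1 := by
  ext i j
  simp [Matrix.map_apply, Matrix.smul_apply, Matrix.one_apply, apply_ite]

lemma block_collapse (f : ℚ_[p][X]) :
    (fromBlocks (1 : Matrix (Fin gm) (Fin gm) ℚ_[p][X]) 0 0
        (f • (1 : Matrix (Fin gp) (Fin gp) ℚ_[p][X])))ᵀ *
      fromBlocks (f • (1 : Matrix (Fin gm) (Fin gm) ℚ_[p][X])) 0 0
        (1 : Matrix (Fin gp) (Fin gp) ℚ_[p][X]) =
      f • (1 : Matrix (Fin gm ⊕ Fin gp) (Fin gm ⊕ Fin gp) ℚ_[p][X]) := by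
  rw [fromBlocks_transpose, transpose_one, transpose_zero, transpose_smul, transpose_one,
    fromBlocks_multiply]
  ext i j
  rcases i with i | i <;> rcases j with j | j <;>
    simp [Matrix.one_apply, Matrix.smul_apply]

lemma AB_collapse (C : Matrix (Fin gm ⊕ Fin gp) (Fin gm ⊕ Fin gp) ℚ_[p])
    (hC : C.det ≠ 0) (k : ℕ) :
    (Cmat p C k)ᵀ * Cstarmat p C k = PhiP p k • 1 := by
  rw [Cmat, Cstarmat, Matrix.transpose_mul]
  calc ((C⁻¹).map Polynomial.C)ᵀ *
        (fromBlocks (1 : Matrix (Fin gm) (Fin gm) ℚ_[p][X]) 0 0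
          (PhiP p k • (1 : Matrix (Fin gp) (Fin gp) ℚ_[p][X])))ᵀ *
        (fromBlocks (PhiP p k • (1 : Matrix (Fin gm) (Fin gm) ℚ_[p][X])) 0 0
          (1 : Matrix (Fin gp) (Fin gp) ℚ_[p][X]) * (Cᵀ).map Polynomial.C)
      = ((C⁻¹).map Polynomial.C)ᵀ *
        (((fromBlocks (1 : Matrix (Fin gm) (Fin gm) ℚ_[p][X]) 0 0
          (PhiP p k • (1 : Matrix (Fin gp) (Fin gp) ℚ_[p][X])))ᵀ *
        fromBlocks (PhiP p k • (1 : Matrix (Fin gm) (Fin gm) ℚ_[p][X])) 0 0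
          (1 : Matrix (Fin gp) (Fin gp) ℚ_[p][X])) * (Cᵀ).map Polynomial.C) := by
        simp only [Matrix.mul_assoc]
    _ = PhiP p k • 1 := by
        rw [block_collapse, Matrix.smul_mul, Matrix.one_mul, Matrix.mul_smul,
          ← Matrix.transpose_map, ← Matrix.map_mul, ← Matrix.transpose_mul,
          Matrix.mul_nonsing_inv _ (isUnit_iff_ne_zero.2 hC), Matrix.transpose_one,
          Matrix.map_one _ (map_zero _) (map_one _)]

lemma prodAB (C : Matrix (Fin gm ⊕ Fin gp) (Fin gm ⊕ Fin gp) ℚ_[p])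
    (hC : C.det ≠ 0) (n : ℕ) :
    ((List.range n).map (fun k => (Cmat p C (k + 1))ᵀ)).prod *
      ((List.range n).map (fun k => Cstarmat p C (n - k))).prod =
      (∏ k ∈ Finset.Icc 1 n, PhiP p k) • 1 := by
  induction n with
  | zero => simp
  | succ n ih =>
    have hA : ((List.range (n + 1)).map (fun k => (Cmat p C (k + 1))ᵀ)).prod =
        ((List.range n).map (fun k => (Cmat p C (k + 1))ᵀ)).prod * (Cmat p C (n + 1))ᵀ := by
      rw [List.range_succ, List.map_append, List.prod_append, List.map_singleton,
        List.prod_singleton]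
    have hB : ((List.range (n + 1)).map (fun k => Cstarmat p C (n + 1 - k))).prod =
        Cstarmat p C (n + 1) * ((List.range n).map (fun k => Cstarmat p C (n - k))).prod := by
      rw [List.range_succ_eq_map, List.map_cons, List.prod_cons, List.map_map]
      simp [Function.comp_def, Nat.succ_sub_succ]
    rw [hA, hB]
    have : ((List.range n).map (fun k => (Cmat p C (k + 1))ᵀ)).prod * (Cmat p C (n + 1))ᵀ *
        (Cstarmat p C (n + 1) * ((List.range n).map (fun k => Cstarmat p C (n - k))).prod) =
        ((List.range n).map (fun k => (Cmat p C (k + 1))ᵀ)).prod *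
          ((Cmat p C (n + 1))ᵀ * Cstarmat p C (n + 1)) *
          ((List.range n).map (fun k => Cstarmat p C (n - k))).prod := by
      simp only [Matrix.mul_assoc]
    rw [this, AB_collapse p C hC, Matrix.mul_smul, Matrix.mul_one, Matrix.smul_mul, ih,
      smul_smul, Finset.prod_Icc_succ_top (Nat.le_add_left 1 n), mul_comm]

/-- for every `n ≥ 1`,
`(C_1ᵗ ⋯ C_nᵗ (C_φᵗ)^{n+1}) · ((C*_φ)^{n+1} C*_n ⋯ C*_1)
  = (1/p^{n+1}) ∏_{k=1}^n Φ_{p^k}(1+X) · I_g` over `ℚ_p[X]`. -/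
theorem stmt_2 (C : Matrix (Fin gm ⊕ Fin gp) (Fin gm ⊕ Fin gp) ℚ_[p])
    (hCint : ∀ i j, ‖C i j‖ ≤ 1) (hCdet : ‖C.det‖ = 1) (n : ℕ) (hn : 1 ≤ n) :
    (((List.range n).map (fun k => (Cmat p C (k + 1))ᵀ)).prod *
          (((Cphi p C).map Polynomial.C)ᵀ) ^ (n + 1)) *
        (((Cstarphi p C).map Polynomial.C) ^ (n + 1) *
          ((List.range n).map (fun k => Cstarmat p C (n - k))).prod) =
      (Polynomial.C (((p : ℚ_[p]) ^ (n + 1))⁻¹) * ∏ k ∈ Finset.Icc 1 n, PhiP p k) •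
        (1 : Matrix (Fin gm ⊕ Fin gp) (Fin gm ⊕ Fin gp) ℚ_[p][X]) := by
  have hC : C.det ≠ 0 := by
    intro h; rw [h, norm_zero] at hCdet; norm_num at hCdet
  have hmid : (((Cphi p C).map Polynomial.C)ᵀ) ^ (n + 1) *
      ((Cstarphi p C).map Polynomial.C) ^ (n + 1) =
      Polynomial.C (((p : ℚ_[p]) ^ (n + 1))⁻¹) • 1 := by
    have hmp : ∀ (M : Matrix (Fin gm ⊕ Fin gp) (Fin gm ⊕ Fin gp) ℚ_[p]) (m : ℕ),
        (M.map ⇑Polynomial.C) ^ m = (M ^ m).map ⇑Polynomial.C := by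
      intro M m
      induction m with
      | zero => simp [Matrix.map_one _ (map_zero _) (map_one _)]
      | succ m ih => rw [pow_succ, pow_succ, Matrix.map_mul, ih]
    rw [← Matrix.transpose_map, hmp, hmp, ← Matrix.map_mul,
      mid_pow p C hC, map_smul_one, inv_pow]
  calc ((List.range n).map (fun k => (Cmat p C (k + 1))ᵀ)).prod *
        (((Cphi p C).map Polynomial.C)ᵀ) ^ (n + 1) *
        (((Cstarphi p C).map Polynomial.C) ^ (n + 1) *
          ((List.range n).map (fun k => Cstarmat p C (n - k))).prod)
      = ((List.range n).map (fun k => (Cmat p C (k + 1))ᵀ)).prod *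
        ((((Cphi p C).map Polynomial.C)ᵀ) ^ (n + 1) *
          ((Cstarphi p C).map Polynomial.C) ^ (n + 1)) *
        ((List.range n).map (fun k => Cstarmat p C (n - k))).prod := by
        simp only [Matrix.mul_assoc]
    _ = (Polynomial.C (((p : ℚ_[p]) ^ (n + 1))⁻¹) * ∏ k ∈ Finset.Icc 1 n, PhiP p k) • 1 := by
        rw [hmid, Matrix.mul_smul, Matrix.mul_one, Matrix.smul_mul, prodAB p C hC n,
          smul_smul]
end

section
/- Let R be a commutative ring, M a free R-module of rank g with basis v_1,…,v_g, and Col_1,…,Col_g : N → R module homomorphisms from an R-module N. Suppose that for each k ∈ {1,…,g} there exists z_k ∈ N with Col_j(z_k) = 0 for all j ≠ k and Col_k(z_k) a non-zero-divisor in R. Fix I ⊆ {1,…,g} and let K_I = ∩_{i∈I} ker(Col_i). If B : N × N' → R is an R-bilinear pairing into a domain R and z' ∈ N' satisfies B(z, z') = 0 for all z ∈ K_I, and moreover B(z,z') = ∑_{k=1}^{g} Col_k(z)·Col'_k(z') for some maps Col'_k : N' → R, then Col'_k(z') = 0 for all k ∉ I. -/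
/-- abstract orthogonality of kernels of Coleman maps. -/
theorem stmt_9 (R : Type*) [CommRing R] [IsDomain R] (g : ℕ)
    (M : Type*) [AddCommGroup M] [Module R M] (v : Module.Basis (Fin g) R M)
    (N N' : Type*) [AddCommGroup N] [Module R N] [AddCommGroup N'] [Module R N']
    (Col : Fin g → (N →ₗ[R] R)) (Col' : Fin g → (N' → R))
    (hz : ∀ k : Fin g, ∃ z : N, (∀ j : Fin g, j ≠ k → Col j z = 0) ∧ Col k z ≠ 0)
    (I : Finset (Fin g))
    (B : N →ₗ[R] N' →ₗ[R] R)
    (hdecomp : ∀ (z : N) (w : N'), B z w = ∑ k : Fin g, Col k z * Col' k w)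
    (z' : N')
    (hz' : ∀ z : N, (∀ i ∈ I, Col i z = 0) → B z z' = 0) :
    ∀ k : Fin g, k ∉ I → Col' k z' = 0 := by
  intro k hk
  obtain ⟨z, hzj, hzk⟩ := hz k
  have hB : B z z' = 0 := hz' z (fun i hi => hzj i (fun h => hk (h ▸ hi)))
  rw [hdecomp] at hB
  rw [Finset.sum_eq_single k (fun j _ hj => by rw [hzj j hj, zero_mul])
    (fun h => absurd (Finset.mem_univ k) h)] at hB
  exact (mul_eq_zero.mp hB).resolve_left hzk
end
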